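/- If a permutation π of [n] contains exactly r occurrences of the pattern 132, then the connected component of the pattern-incidence bipartite graph of π containing the entry n involves at most 2r+1 entries of π. -/

import Mathlib

/-- The number of occurrences of the pattern 132 in a permutation of `Fin n`:
triples of positions `i < j < k` with `π i < π k < π j`. -/
def occ132 {n : ℕ} (π : Equiv.Perm (Fin n)) : ℕ :=
  (Finset.univ.filter (fun t : Fin n × Fin n × Fin n =>
    t.1 < t.2.1 ∧ t.2.1 < t.2.2 ∧ π t.1 < π t.2.2 ∧ π t.2.2 < π t.2.1)).card

/-- Two entries (given by their positions `a`, `b`) are adjacent in the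
pattern-incidence bipartite graph `G_π` iff some occurrence of 132 contains both. -/
def Adj132 {n : ℕ} (π : Equiv.Perm (Fin n)) (a b : Fin n) : Prop :=
  ∃ i j k : Fin n, i < j ∧ j < k ∧ π i < π k ∧ π k < π j ∧
    (a = i ∨ a = j ∨ a = k) ∧ (b = i ∨ b = j ∨ b = k)

/-- The kernel of `π`: the set of entries (positions) lying in the connected
component of the entry `n` (the maximal value, located at position `π⁻¹(n)`) in the
bipartite graph `G_π` of entries versus occurrences of 132. -/
def kernel132 {n : ℕ} (π : Equiv.Perm (Fin (n + 1))) : Set (Fin (n + 1)) :=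
  {b | Relation.ReflTransGen (Adj132 π) (π.symm (Fin.last n)) b}

/-- Walks of length `m` from `a` to `b` along a relation `A`. -/
def steps132 {α : Type*} (A : α → α → Prop) : ℕ → α → α → Prop
  | 0, a, b => a = b
  | (m+1), a, b => ∃ c, steps132 A m a c ∧ A c b

lemma reflTransGen_iff_steps132 {α : Type*} (A : α → α → Prop) (a b : α) :
    Relation.ReflTransGen A a b ↔ ∃ m, steps132 A m a b := by
  constructor
  · intro h
    induction h with
    | refl => exact ⟨0, rfl⟩
    | tail _ hbc ih => obtain ⟨m, hm⟩ := ih; exact ⟨m + 1, _, hm, hbc⟩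
  · rintro ⟨m, hm⟩
    induction m generalizing b with
    | zero => exact hm ▸ Relation.ReflTransGen.refl
    | succ m ih => obtain ⟨c, hc, hcb⟩ := hm; exact (ih c hc).tail hcb

/-- If a permutation `π` of `[n]` contains exactly `r` occurrences of the
pattern 132, then its kernel (the connected component of the entry `n` in the
pattern-incidence bipartite graph) has size at most `2r+1`. -/
theorem kernel132_card_le {n r : ℕ} (π : Equiv.Perm (Fin (n + 1)))
    (hπ : occ132 π = r) : (kernel132 π).ncard ≤ 2 * r + 1 := by
  classical
  set A := Adj132 π with hA
  set root := π.symm (Fin.last n) with hroot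
  -- distance function from root
  have hex : ∀ b ∈ kernel132 π, ∃ m, steps132 A m root b := fun b hb =>
    (reflTransGen_iff_steps132 A root b).1 hb
  set d : Fin (n + 1) → ℕ := fun b =>
    if h : ∃ m, steps132 A m root b then Nat.find h else 0 with hd
  have hd_step : ∀ b (h : ∃ m, steps132 A m root b), steps132 A (d b) root b := by
    intro b h
    simp only [hd, dif_pos h]
    exact Nat.find_spec h
  have hd_min : ∀ b m, steps132 A m root b → d b ≤ m := by
    intro b m hm
    have h : ∃ m, steps132 A m root b := ⟨m, hm⟩
    simp only [hd, dif_pos h]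
    exact Nat.find_le hm
  -- the set of occurrences
  set occs : Finset (Fin (n + 1) × Fin (n + 1) × Fin (n + 1)) :=
    Finset.univ.filter (fun t : Fin (n + 1) × Fin (n + 1) × Fin (n + 1) =>
      t.1 < t.2.1 ∧ t.2.1 < t.2.2 ∧ π t.1 < π t.2.2 ∧ π t.2.2 < π t.2.1) with hoccs
  have hoccs_card : occs.card = r := hπ
  set mem3 : Fin (n + 1) → Fin (n + 1) × Fin (n + 1) × Fin (n + 1) → Prop :=
    fun b t => b = t.1 ∨ b = t.2.1 ∨ b = t.2.2 with hmem3
  -- key: each non-root kernel element lies in an occurrence with a closer entry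
  have hkey : ∀ b ∈ kernel132 π, b ≠ root →
      ∃ t, t ∈ occs ∧ mem3 b t ∧ ∃ c, mem3 c t ∧ d c < d b := by
    intro b hb hne
    have h := hex b hb
    have hs := hd_step b h
    rcases hm : d b with _ | m
    · rw [hm] at hs
      exact absurd hs.symm hne
    · rw [hm] at hs
      obtain ⟨c, hc, hcb⟩ := hs
      obtain ⟨i, j, k, h1, h2, h3, h4, hcm, hbm⟩ := hcb
      refine ⟨(i, j, k), ?_, hbm, c, hcm, ?_⟩
      · simp only [hoccs, Finset.mem_filter, Finset.mem_univ, true_and]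
        exact ⟨h1, h2, h3, h4⟩
      · have := hd_min c m hc
        omega
  -- choice of such occurrence
  set f : Fin (n + 1) → Fin (n + 1) × Fin (n + 1) × Fin (n + 1) :=
    fun b => if h : b ∈ kernel132 π ∧ b ≠ root then (hkey b h.1 h.2).choose
      else (root, root, root) with hf
  have hf_spec : ∀ b (hb : b ∈ kernel132 π) (hne : b ≠ root),
      f b ∈ occs ∧ mem3 b (f b) ∧ ∃ c, mem3 c (f b) ∧ d c < d b := by
    intro b hb hne
    have h : b ∈ kernel132 π ∧ b ≠ root := ⟨hb, hne⟩
    simp only [hf, dif_pos h]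
    exact (hkey b h.1 h.2).choose_spec
  -- finset version of the kernel
  have hfin : (kernel132 π).Finite := Set.toFinite _
  set K : Finset (Fin (n + 1)) := hfin.toFinset with hK
  have hKmem : ∀ b, b ∈ K ↔ b ∈ kernel132 π := fun b => Set.Finite.mem_toFinset hfin
  set K' : Finset (Fin (n + 1)) := K.erase root with hK'
  have hrootK : root ∈ K := (hKmem root).2 Relation.ReflTransGen.refl
  -- fiber bound
  have hfiber : ∀ t ∈ K'.image f, (K'.filter (fun x => f x = t)).card ≤ 2 := by
    intro t ht
    set F := K'.filter (fun x => f x = t) with hF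
    have hmemK' : ∀ b ∈ F, b ∈ kernel132 π ∧ b ≠ root ∧ f b = t := by
      intro b hbF
      rw [hF, Finset.mem_filter, hK', Finset.mem_erase] at hbF
      exact ⟨(hKmem b).1 hbF.1.2, hbF.1.1, hbF.2⟩
    have hsub : F ⊆ {t.1, t.2.1, t.2.2} := by
      intro b hbF
      obtain ⟨hb, hne, hfb⟩ := hmemK' b hbF
      have := (hf_spec b hb hne).2.1
      rw [hfb] at this
      simp only [Finset.mem_insert, Finset.mem_singleton]
      exact this
    have htriple3 : ({t.1, t.2.1, t.2.2} : Finset _).card ≤ 3 :=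
      Finset.card_insert_le _ _ |>.trans
        (by simpa using Nat.add_le_add_right (Finset.card_insert_le t.2.1 ({t.2.2} : Finset (Fin (n + 1)))) 1)
    have h3 : F.card ≤ 3 := (Finset.card_le_card hsub).trans htriple3
    have hne3 : F.card ≠ 3 := by
      intro h3eq
      have hFeq : F = {t.1, t.2.1, t.2.2} :=
        Finset.eq_of_subset_of_card_le hsub (by omega)
      have hFne : F.Nonempty := Finset.card_pos.1 (by omega)
      obtain ⟨b, hbF, hbmin⟩ := Finset.exists_min_image F d hFne
      obtain ⟨hb, hne, hfb⟩ := hmemK' b hbF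
      obtain ⟨c, hcm, hdc⟩ := (hf_spec b hb hne).2.2
      rw [hfb] at hcm
      have hcF : c ∈ F := by
        rw [hFeq]
        simp only [Finset.mem_insert, Finset.mem_singleton]
        exact hcm
      have := hbmin c hcF
      omega
    omega
  -- combine
  have hK'card : K'.card ≤ 2 * occs.card := by
    have h1 : K'.card ≤ 2 * (K'.image f).card := Finset.card_le_mul_card_image K' 2 hfiber
    have h2 : K'.image f ⊆ occs := by
      intro t ht
      obtain ⟨b, hbK', rfl⟩ := Finset.mem_image.1 ht
      rw [hK', Finset.mem_erase] at hbK'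
      exact (hf_spec b ((hKmem b).1 hbK'.2) hbK'.1).1
    have h3 : (K'.image f).card ≤ occs.card := Finset.card_le_card h2
    omega
  have hKcard : K.card = K'.card + 1 := by
    rw [hK', Finset.card_erase_of_mem hrootK]
    have : 0 < K.card := Finset.card_pos.2 ⟨root, hrootK⟩
    omega
  have hncard : (kernel132 π).ncard = K.card := Set.ncard_eq_toFinset_card _ hfin
  omega
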